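/- Let g_q(x) = (1/(q−1))·[1 − ((1+√(1−x))/2)^q − ((1−√(1−x))/2)^q]. For 2 ≤ q ≤ 3 and real numbers x, y ≥ 0 with x² + y² ≤ 1, g_q(x² + y²) ≥ g_q(x²) + g_q(y²). -/

import Mathlib

open Real Set


-- tangent line inequality for concave x^e, e ∈ [0,1]
lemma Ktan {e B x : ℝ} (he0 : 0 ≤ e) (he1 : e ≤ 1) (hB : 0 < B) (hBx : B ≤ x) :
    B ^ e ≤ x ^ e + e * x ^ (e - 1) * (B - x) := by
  have hx : 0 < x := lt_of_lt_of_le hB hBx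
  have h1 : (-1 : ℝ) ≤ B / x - 1 := by
    have : 0 ≤ B / x := le_of_lt (div_pos hB hx)
    linarith
  have h := rpow_one_add_le_one_add_mul_self h1 he0 he1
  rw [add_sub_cancel] at h
  -- (B/x)^e ≤ 1 + e*(B/x - 1)
  have hxe : (0:ℝ) < x ^ e := rpow_pos_of_pos hx e
  have hmul := mul_le_mul_of_nonneg_left h hxe.le
  have hBx' : x ^ e * (B / x) ^ e = B ^ e := by
    rw [← Real.mul_rpow hx.le (by positivity)]
    rw [mul_div_cancel₀ _ hx.ne']
  rw [hBx'] at hmul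
  have hpow : x ^ e * (B / x - 1) = x ^ (e - 1) * (B - x) := by
    rw [Real.rpow_sub hx, Real.rpow_one]
    field_simp
  calc B ^ e ≤ x ^ e * (1 + e * (B / x - 1)) := hmul
    _ = x ^ e + e * (x ^ e * (B / x - 1)) := by ring
    _ = x ^ e + e * x ^ (e - 1) * (B - x) := by rw [hpow]; ring

lemma Kineq {r B A : ℝ} (hr1 : 1 ≤ r) (hr2 : r ≤ 2) (hB : 0 < B) (hBA : B ≤ A) :
    r / 2 * (A - B) * (A ^ (r - 1) + B ^ (r - 1)) ≤ A ^ r - B ^ r := by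
  set f : ℝ → ℝ := fun x => x ^ r - B ^ r - r / 2 * ((x - B) * (x ^ (r - 1) + B ^ (r - 1)))
    with hf
  have key : ∀ x ∈ Ici B, HasDerivAt f
      (r * x ^ (r - 1) - r / 2 * ((x ^ (r-1) + B ^ (r-1)) + (x - B) * ((r-1) * x ^ (r-1-1)))) x := by
    intro x hx
    have hx0 : (0:ℝ) < x := lt_of_lt_of_le hB hx
    have d1 : HasDerivAt (fun x : ℝ => x ^ r) (r * x ^ (r - 1)) x :=
      Real.hasDerivAt_rpow_const (Or.inl hx0.ne')
    have d2 : HasDerivAt (fun x : ℝ => x ^ (r - 1)) ((r - 1) * x ^ (r - 1 - 1)) x :=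
      Real.hasDerivAt_rpow_const (Or.inl hx0.ne')
    have d3 : HasDerivAt (fun x : ℝ => (x - B) * (x ^ (r - 1) + B ^ (r - 1)))
        (1 * (x ^ (r-1) + B ^ (r-1)) + (x - B) * ((r-1) * x ^ (r-1-1))) x := by
      exact ((hasDerivAt_id x).sub_const B).mul (d2.add_const _)
    have := ((d1.sub_const (B ^ r)).sub (d3.const_mul (r / 2)))
    refine this.congr_deriv ?_
    ring
  have mono : MonotoneOn f (Ici B) := by
    apply monotoneOn_of_deriv_nonneg (convex_Ici B)
    · exact fun x hx => ((key x hx).continuousAt).continuousWithinAt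
    · intro x hx
      rw [interior_Ici] at hx
      exact ((key x (mem_Ici.mpr (le_of_lt hx))).differentiableAt).differentiableWithinAt
    · intro x hx
      rw [interior_Ici] at hx
      rw [(key x (mem_Ici.mpr (le_of_lt hx))).deriv]
      have hx0 : (0:ℝ) < x := lt_of_lt_of_le hB hx.le
      have ht := Ktan (e := r - 1) (by linarith) (by linarith) hB hx.le
      have h2 : r - 1 - 1 = r - 2 := by ring
      -- need: 0 ≤ r*x^(r-1) - r/2*((x^(r-1)+B^(r-1)) + (x-B)*((r-1)*x^(r-2)))
      have hr0 : (0:ℝ) < r := by linarith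
      nlinarith [ht, rpow_pos_of_pos hx0 (r-1), rpow_pos_of_pos hB (r-1)]
  have h0 : f B = 0 := by simp [hf]
  have h1 : f B ≤ f A := mono (self_mem_Ici) hBA hBA
  rw [h0] at h1
  simp only [hf] at h1
  nlinarith [h1]

lemma psi_anti {q : ℝ} (hq2 : 2 ≤ q) (hq3 : q ≤ 3) :
    AntitoneOn (fun s : ℝ => (((1+s)/2) ^ (q-1) - ((1-s)/2) ^ (q-1)) / s) (Ioo 0 1) := by
  set ψ : ℝ → ℝ := fun s => (((1+s)/2) ^ (q-1) - ((1-s)/2) ^ (q-1)) / s with hψ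
  have key : ∀ s ∈ Ioo (0:ℝ) 1, HasDerivAt ψ
      ((((q-1)/2 * ((1+s)/2) ^ (q-1-1) + (q-1)/2 * ((1-s)/2) ^ (q-1-1)) * s
        - (((1+s)/2) ^ (q-1) - ((1-s)/2) ^ (q-1)) * 1) / s ^ 2) s := by
    intro s hs
    obtain ⟨hs0, hs1⟩ := hs
    have hA : (0:ℝ) < (1+s)/2 := by linarith
    have hB : (0:ℝ) < (1-s)/2 := by linarith
    have dA : HasDerivAt (fun s : ℝ => ((1+s)/2) ^ (q-1))
        ((q-1) * ((1+s)/2) ^ (q-1-1) * (1/2)) s := by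
      have inner : HasDerivAt (fun s : ℝ => (1+s)/2) (1/2) s := by
        simpa using (((hasDerivAt_id s).const_add 1).div_const 2)
      exact (Real.hasDerivAt_rpow_const (p := q-1) (Or.inl hA.ne')).comp s inner
    have dB : HasDerivAt (fun s : ℝ => ((1-s)/2) ^ (q-1))
        ((q-1) * ((1-s)/2) ^ (q-1-1) * (-1/2)) s := by
      have inner : HasDerivAt (fun s : ℝ => (1-s)/2) (-1/2) s := by
        have h1 : HasDerivAt (fun s : ℝ => 1 - s) (-1) s := by
          simpa using ((hasDerivAt_id s).const_sub 1)
        simpa using h1.div_const 2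
      exact (Real.hasDerivAt_rpow_const (p := q-1) (Or.inl hB.ne')).comp s inner
    have dnum : HasDerivAt (fun s : ℝ => ((1+s)/2) ^ (q-1) - ((1-s)/2) ^ (q-1))
        ((q-1)/2 * ((1+s)/2) ^ (q-1-1) + (q-1)/2 * ((1-s)/2) ^ (q-1-1)) s := by
      have h2 := dA.sub dB
      refine h2.congr_deriv ?_
      ring
    have h3 := dnum.div (hasDerivAt_id s) hs0.ne'
    exact h3.congr_deriv (by simp)
  apply antitoneOn_of_deriv_nonpos (convex_Ioo 0 1)
  · exact fun s hs => ((key s hs).continuousAt).continuousWithinAt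
  · rw [interior_Ioo]
    exact fun s hs => ((key s hs).differentiableAt).differentiableWithinAt
  · rw [interior_Ioo]
    intro s hs
    rw [(key s hs).deriv]
    obtain ⟨hs0, hs1⟩ := hs
    have hA : (0:ℝ) < (1+s)/2 := by linarith
    have hB : (0:ℝ) < (1-s)/2 := by linarith
    have hBA : (1-s)/2 ≤ (1+s)/2 := by linarith
    have hK := Kineq (r := q-1) (by linarith) (by linarith) hB hBA
    apply div_nonpos_of_nonpos_of_nonneg _ (sq_nonneg s)
    have hd : (1+s)/2 - (1-s)/2 = s := by ring
    rw [hd] at hK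
    nlinarith [hK]

noncomputable def Gf (q m : ℝ) : ℝ := ((1 + Real.sqrt m)/2) ^ q + ((1 - Real.sqrt m)/2) ^ q

lemma G_hasDeriv {q : ℝ} (hq2 : 2 ≤ q) (hq3 : q ≤ 3) {m : ℝ} (hm : m ∈ Ioo (0:ℝ) 1) :
    HasDerivAt (Gf q)
      (q / 4 * ((((1 + Real.sqrt m)/2) ^ (q-1) - ((1 - Real.sqrt m)/2) ^ (q-1)) / Real.sqrt m))
      m := by
  obtain ⟨hm0, hm1⟩ := hm
  have hs0 : 0 < Real.sqrt m := Real.sqrt_pos.mpr hm0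
  have hs1 : Real.sqrt m < 1 := by
    rw [show (1:ℝ) = Real.sqrt 1 by simp]
    exact Real.sqrt_lt_sqrt hm0.le hm1
  have hA : (0:ℝ) < (1 + Real.sqrt m)/2 := by linarith
  have hB : (0:ℝ) < (1 - Real.sqrt m)/2 := by linarith
  have dsq : HasDerivAt Real.sqrt (1 / (2 * Real.sqrt m)) m := Real.hasDerivAt_sqrt hm0.ne'
  have dA : HasDerivAt (fun m : ℝ => (1 + Real.sqrt m)/2) (1 / (2 * Real.sqrt m) / 2) m := by
    exact (dsq.const_add 1).div_const 2
  have dB : HasDerivAt (fun m : ℝ => (1 - Real.sqrt m)/2) (-(1 / (2 * Real.sqrt m)) / 2) m := by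
    exact (dsq.const_sub 1).div_const 2
  have dAq : HasDerivAt (fun m : ℝ => ((1 + Real.sqrt m)/2) ^ q)
      (q * ((1 + Real.sqrt m)/2) ^ (q-1) * (1 / (2 * Real.sqrt m) / 2)) m :=
    by have := (Real.hasDerivAt_rpow_const (x := (1 + Real.sqrt m)/2) (p := q) (Or.inl hA.ne')).comp m dA; exact this
  have dBq : HasDerivAt (fun m : ℝ => ((1 - Real.sqrt m)/2) ^ q)
      (q * ((1 - Real.sqrt m)/2) ^ (q-1) * (-(1 / (2 * Real.sqrt m)) / 2)) m :=
    by have := (Real.hasDerivAt_rpow_const (x := (1 - Real.sqrt m)/2) (p := q) (Or.inl hB.ne')).comp m dB; exact this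
  have h := dAq.add dBq
  refine h.congr_deriv ?_
  field_simp
  ring

lemma G_concave {q : ℝ} (hq2 : 2 ≤ q) (hq3 : q ≤ 3) : ConcaveOn ℝ (Icc 0 1) (Gf q) := by
  apply AntitoneOn.concaveOn_of_deriv (convex_Icc 0 1)
  · -- continuity
    have hc : Continuous fun x : ℝ => x ^ q :=
      continuous_iff_continuousAt.mpr fun x =>
        Real.continuousAt_rpow_const x q (Or.inr (by linarith))
    have h1 : Continuous fun m : ℝ => ((1 + Real.sqrt m)/2) ^ q :=
      hc.comp (((continuous_const.add Real.continuous_sqrt).div_const 2))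
    have h2 : Continuous fun m : ℝ => ((1 - Real.sqrt m)/2) ^ q :=
      hc.comp (((continuous_const.sub Real.continuous_sqrt).div_const 2))
    exact (h1.add h2).continuousOn
  · rw [interior_Icc]
    exact fun m hm => ((G_hasDeriv hq2 hq3 hm).differentiableAt).differentiableWithinAt
  · rw [interior_Icc]
    have heq : ∀ m ∈ Ioo (0:ℝ) 1, deriv (Gf q) m
        = q / 4 * ((((1 + Real.sqrt m)/2) ^ (q-1) - ((1 - Real.sqrt m)/2) ^ (q-1)) / Real.sqrt m) :=
      fun m hm => (G_hasDeriv hq2 hq3 hm).deriv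
    intro a ha b hb hab
    rw [heq a ha, heq b hb]
    have hq0 : (0:ℝ) ≤ q / 4 := by linarith
    apply mul_le_mul_of_nonneg_left _ hq0
    have hsa : Real.sqrt a ∈ Ioo (0:ℝ) 1 := by
      constructor
      · exact Real.sqrt_pos.mpr ha.1
      · rw [show (1:ℝ) = Real.sqrt 1 by simp]
        exact Real.sqrt_lt_sqrt ha.1.le ha.2
    have hsb : Real.sqrt b ∈ Ioo (0:ℝ) 1 := by
      constructor
      · exact Real.sqrt_pos.mpr hb.1
      · rw [show (1:ℝ) = Real.sqrt 1 by simp]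
        exact Real.sqrt_lt_sqrt hb.1.le hb.2
    exact psi_anti hq2 hq3 hsa hsb (Real.sqrt_le_sqrt hab)

lemma G_superadd {q : ℝ} (hq2 : 2 ≤ q) (hq3 : q ≤ 3) {u v : ℝ} (hu : 0 ≤ u) (hv : 0 ≤ v)
    (huv : u + v ≤ 1) : Gf q 1 + Gf q (1 - u - v) ≤ Gf q (1 - u) + Gf q (1 - v) := by
  rcases eq_or_lt_of_le (by linarith : (0:ℝ) ≤ u + v) with h | h
  · have hu0 : u = 0 := by linarith
    have hv0 : v = 0 := by linarith
    simp [hu0, hv0]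
  · set w : ℝ := 1 - u - v with hw
    set l : ℝ := u / (u + v) with hl
    have hl0 : 0 ≤ l := by positivity
    have hl1 : l ≤ 1 := by
      rw [hl, div_le_one h]; linarith
    have hwmem : w ∈ Icc (0:ℝ) 1 := ⟨by linarith, by linarith⟩
    have h1mem : (1:ℝ) ∈ Icc (0:ℝ) 1 := ⟨zero_le_one, le_refl 1⟩
    have hcon := G_concave hq2 hq3
    have c1 := hcon.2 hwmem h1mem hl0 (by linarith : (0:ℝ) ≤ 1 - l) (by ring)
    have c2 := hcon.2 hwmem h1mem (by linarith : (0:ℝ) ≤ 1 - l) hl0 (by ring)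
    have e1 : l • w + (1 - l) • (1:ℝ) = 1 - u := by
      simp only [smul_eq_mul, hl, hw]
      field_simp
      ring
    have e2 : (1 - l) • w + l • (1:ℝ) = 1 - v := by
      have : (1:ℝ) - l = v / (u + v) := by
        rw [hl]; field_simp; ring
      simp only [smul_eq_mul, this, hl, hw]
      field_simp
      ring
    rw [e1] at c1
    rw [e2] at c2
    simp only [smul_eq_mul] at c1 c2
    nlinarith [c1, c2]

theorem stmt_8 (q : ℝ) (hq2 : 2 ≤ q) (hq3 : q ≤ 3) (x y : ℝ)
    (hx : 0 ≤ x) (hy : 0 ≤ y) (hxy : x ^ 2 + y ^ 2 ≤ 1)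
    (g : ℝ → ℝ)
    (hg : ∀ t, g t = (1 / (q - 1)) * (1 - ((1 + Real.sqrt (1 - t)) / 2) ^ q
      - ((1 - Real.sqrt (1 - t)) / 2) ^ q)) :
    g (x ^ 2 + y ^ 2) ≥ g (x ^ 2) + g (y ^ 2) := by
  have hgG : ∀ t : ℝ, g t = (1 / (q - 1)) * (1 - Gf q (1 - t)) := by
    intro t
    rw [hg t, Gf]
    ring
  have hG1 : Gf q 1 = 1 := by
    rw [Gf]
    simp only [Real.sqrt_one]
    norm_num
    exact Real.zero_rpow (by linarith : q ≠ 0)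
  have key := G_superadd hq2 hq3 (sq_nonneg x) (sq_nonneg y) hxy
  rw [hG1] at key
  rw [hgG, hgG, hgG]
  have hq1 : (0:ℝ) < 1 / (q - 1) := by
    apply div_pos one_pos; linarith
  have harg : (1:ℝ) - (x ^ 2 + y ^ 2) = 1 - x ^ 2 - y ^ 2 := by ring
  rw [harg]
  have := mul_le_mul_of_nonneg_left
    (by linarith [key] : (1 - Gf q (1 - x^2)) + (1 - Gf q (1 - y^2)) ≤ 1 - Gf q (1 - x^2 - y^2))
    hq1.le
  rw [ge_iff_le]
  nlinarith [this]
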